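/- As binary relations on βℕ, the following strict inclusions hold: ∣_L ⊊ ∣_M, ∣_R ⊊ ∣_M, ∣_M ⊊ ≤_fe, and ≤_fe ⊊ ∣~. That is: F ∣_L G implies F ∣_M G, F ∣_R G implies F ∣_M G, F ∣_M G implies F ≤_fe G, and F ≤_fe G implies F ∣~ G, and none of these four implications can be reversed (for each there exist ultrafilters witnessing failure of the converse). -/

import Mathlib

/-- Upward closure under divisibility: `A↑ = {n : ∃ a ∈ A, a ∣ n}`. -/
def upcl (A : Set ℕ+) : Set ℕ+ := {n | ∃ a ∈ A, a ∣ n}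

/-- `F ∣~ G` iff `A↑ ∈ G` for every `A ∈ F`. -/
def udvd (F G : Ultrafilter ℕ+) : Prop := ∀ A ∈ F, upcl A ∈ G

/-- The extension of multiplication to `βℕ`:
`A ∈ F·G` iff `{m : {n : m*n ∈ A} ∈ G} ∈ F`. -/
def umul (F G : Ultrafilter ℕ+) : Ultrafilter ℕ+ :=
  F.bind fun m => Ultrafilter.map (fun n => m * n) G

/-- Left divisibility: `F ∣_L G` iff `G = H·F` for some `H`. -/
def divL (F G : Ultrafilter ℕ+) : Prop := ∃ H, G = umul H F

/-- Right divisibility: `F ∣_R G` iff `G = F·H` for some `H`. -/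
def divR (F G : Ultrafilter ℕ+) : Prop := ∃ H, G = umul F H

/-- Mid divisibility: `F ∣_M G` iff `G = H·F·K` for some `H, K`. -/
def divM (F G : Ultrafilter ℕ+) : Prop := ∃ H K, G = umul (umul H F) K

/-- `A ≤_fe B` for sets: every finite subset of `A` has a multiple inside `B`. -/
def feSet (A B : Set ℕ+) : Prop :=
  ∀ S : Finset ℕ+, ↑S ⊆ A → ∃ k : ℕ+, ∀ s ∈ S, k * s ∈ B

/-- `F ≤_fe G` for ultrafilters: for every `B ∈ G` there is `A ∈ F` with `A ≤_fe B`. -/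
def fe (F G : Ultrafilter ℕ+) : Prop := ∀ B ∈ G, ∃ A ∈ F, feSet A B

open Filter Set

namespace Aux19

/-! ### Generic ultrafilter helpers -/

lemma mem_umul {X Y : Ultrafilter ℕ+} {A : Set ℕ+} :
    A ∈ umul X Y ↔ {m : ℕ+ | {n : ℕ+ | m * n ∈ A} ∈ Y} ∈ X := by
  change A ∈ Filter.bind _ _ ↔ _
  rw [Filter.mem_bind']
  rfl

lemma mem_umul3 {H F K : Ultrafilter ℕ+} {A : Set ℕ+} :
    A ∈ umul (umul H F) K ↔
      {h : ℕ+ | {m : ℕ+ | {k : ℕ+ | h * m * k ∈ A} ∈ K} ∈ F} ∈ H := by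
  rw [mem_umul, mem_umul]; rfl

lemma uf_ext {X Y : Ultrafilter ℕ+} (h : ∀ A : Set ℕ+, A ∈ X ↔ A ∈ Y) : X = Y :=
  Ultrafilter.coe_injective (Filter.ext h)

lemma umul_one_left (X : Ultrafilter ℕ+) : umul (pure 1) X = X := by
  refine uf_ext fun A => ?_
  rw [mem_umul, Ultrafilter.mem_pure]
  simp only [Set.mem_setOf_eq, one_mul]
  rfl

lemma umul_one_right (X : Ultrafilter ℕ+) : umul X (pure 1) = X := by
  refine uf_ext fun A => ?_
  rw [mem_umul]
  have : {m : ℕ+ | {n : ℕ+ | m * n ∈ A} ∈ (pure 1 : Ultrafilter ℕ+)} = A := by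
    ext m; simp [Ultrafilter.mem_pure]
  rw [this]

lemma uf_pick {α : Type*} {X : Ultrafilter α} {A B : Set α}
    (hA : A ∈ X) (hB : B ∈ X) : ∃ x, x ∈ A ∧ x ∈ B :=
  Ultrafilter.nonempty_of_mem (Filter.inter_mem hA hB)

lemma uf_cofin {α : Type*} {X : Ultrafilter α} (hnf : ∀ B : Set α, B.Finite → B ∉ X)
    {S : Set α} (h : Sᶜ.Finite) : S ∈ X := by
  have := (Ultrafilter.compl_mem_iff_notMem).2 (hnf _ h)
  rwa [compl_compl] at this


lemma usup {α : Type*} {X : Ultrafilter α} {s t : Set α} (h : s ∈ X) (hsub : s ⊆ t) : t ∈ X :=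
  Filter.mem_of_superset h hsub

lemma uint {α : Type*} {X : Ultrafilter α} {s t : Set α} (hs : s ∈ X) (ht : t ∈ X) :
    s ∩ t ∈ X := Filter.inter_mem hs ht

lemma uuniv {α : Type*} {X : Ultrafilter α} : (Set.univ : Set α) ∈ X := Filter.univ_mem

noncomputable def ufOf {α : Type*} (f : ℕ → α) : Ultrafilter α :=
  (Filter.hyperfilter ℕ).map f

lemma ufOf_mem {α : Type*} {f : ℕ → α} {S : Set α} (h : ∀ n, f n ∈ S) : S ∈ ufOf f := by
  rw [ufOf, Ultrafilter.mem_map]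
  have : f ⁻¹' S = Set.univ := Set.eq_univ_of_forall h
  rw [this]; exact Filter.univ_mem

lemma ufOf_nmem {α : Type*} {f : ℕ → α} (hf : Function.Injective f) {A : Set α}
    (hA : A.Finite) : A ∉ ufOf f := by
  rw [ufOf, Ultrafilter.mem_map]
  exact Filter.notMem_hyperfilter_of_finite (hA.preimage hf.injOn)

/-! ### Number-theoretic basics over `ℕ+` -/

def Qset : Set ℕ+ := {p : ℕ+ | (p : ℕ).Prime ∧ ¬ (2 ∣ (p : ℕ))}

def twoPow : Set ℕ+ := {x : ℕ+ | ∃ a : ℕ, x = 2 ^ a}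

def v2 (x : ℕ+) : ℕ := padicValNat 2 (x : ℕ)

def om (x : ℕ+) : ℕ := (((x : ℕ).primeFactorsList).filter (· ≠ 2)).length

lemma Qset_infinite : Qset.Infinite := by
  have h1 : {p : ℕ | p.Prime ∧ p ≠ 2}.Infinite := by
    have := Nat.infinite_setOf_prime
    have h2 : {p : ℕ | p.Prime ∧ p ≠ 2} = {p : ℕ | p.Prime} \ {2} := by
      ext p; simp [Set.mem_diff, and_comm]
    rw [h2]
    exact this.diff (Set.finite_singleton 2)
  set e := h1.natEmbedding
  apply Set.infinite_of_injective_forall_mem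
    (f := fun n => (⟨(e n : ℕ), (e n).2.1.pos⟩ : ℕ+)) ?_ ?_
  · intro a b hab
    apply e.injective
    exact Subtype.ext (congrArg (fun x : ℕ+ => (x : ℕ)) hab)
  · intro n
    refine ⟨(e n).2.1, ?_⟩
    intro hdvd
    have : (2 : ℕ).Prime := Nat.prime_two
    have heq : ((e n : ℕ)) = 2 := ((Nat.prime_dvd_prime_iff_eq this (e n).2.1).1 hdvd).symm
    exact (e n).2.2 heq

lemma coe_ne_zero (x : ℕ+) : (x : ℕ) ≠ 0 := x.ne_zero

lemma om_mul (x y : ℕ+) : om (x * y) = om x + om y := by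
  unfold om
  rw [PNat.mul_coe]
  have hp := Nat.perm_primeFactorsList_mul (coe_ne_zero x) (coe_ne_zero y)
  have := (hp.filter (· ≠ 2)).length_eq
  rw [this, List.filter_append, List.length_append]

lemma om_Q {p : ℕ+} (hp : p ∈ Qset) : om p = 1 := by
  unfold om
  rw [Nat.primeFactorsList_prime hp.1]
  have h2 : (p : ℕ) ≠ 2 := fun h => hp.2 (by rw [h])
  simp [h2]

lemma om_two_pow (a : ℕ) : om ((2 : ℕ+) ^ a) = 0 := by
  unfold om
  rw [PNat.pow_coe]
  have : ((2 : ℕ+) : ℕ) = 2 := rfl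
  rw [this, Nat.Prime.primeFactorsList_pow Nat.prime_two]
  simp

lemma om_zero_twoPow {x : ℕ+} (h : om x = 0) : x ∈ twoPow := by
  unfold om at h
  rw [List.length_eq_zero_iff] at h
  have hall : ∀ d : ℕ, d.Prime → d ∣ (x : ℕ) → d = 2 := by
    intro d hd hdvd
    by_contra hne
    have hmem : d ∈ (x : ℕ).primeFactorsList :=
      (Nat.mem_primeFactorsList (coe_ne_zero x)).2 ⟨hd, hdvd⟩
    have : d ∈ ((x : ℕ).primeFactorsList).filter (· ≠ 2) := by
      rw [List.mem_filter]
      exact ⟨hmem, by simpa using hne⟩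
    rw [h] at this
    simp at this
  have := Nat.eq_prime_pow_of_unique_prime_dvd (coe_ne_zero x) (fun {d} hd hdvd => hall d hd hdvd)
  refine ⟨(x : ℕ).primeFactorsList.length, ?_⟩
  apply PNat.coe_injective
  rw [PNat.pow_coe]
  exact this

lemma v2_mul (x y : ℕ+) : v2 (x * y) = v2 x + v2 y := by
  unfold v2
  rw [PNat.mul_coe]
  exact padicValNat.mul (coe_ne_zero x) (coe_ne_zero y)

lemma v2_two_pow (a : ℕ) : v2 ((2 : ℕ+) ^ a) = a := by
  unfold v2
  rw [PNat.pow_coe]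
  exact padicValNat.prime_pow a

lemma v2_Q {p : ℕ+} (hp : p ∈ Qset) : v2 p = 0 :=
  padicValNat.eq_zero_of_not_dvd hp.2

lemma twoPow_eq {k : ℕ+} (hk : k ∈ twoPow) : k = 2 ^ (v2 k) := by
  obtain ⟨a, rfl⟩ := hk
  rw [v2_two_pow]

lemma decode {p q : ℕ+} (hp : p ∈ Qset) (hq : q ∈ Qset) {n m : ℕ}
    (h : p * 2 ^ n = q * 2 ^ m) : p = q ∧ n = m := by
  have hv : n = m := by
    have := congrArg v2 h
    rwa [v2_mul, v2_mul, v2_Q hp, v2_Q hq, v2_two_pow, v2_two_pow, zero_add, zero_add] at this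
  subst hv
  exact ⟨mul_right_cancel h, rfl⟩

def MM (P : ℕ+ → ℕ → Prop) : Set ℕ+ := {x : ℕ+ | ∃ q ∈ Qset, ∃ m : ℕ, x = q * 2 ^ m ∧ P q m}

lemma MM_iff {p : ℕ+} (hp : p ∈ Qset) {n : ℕ} {P : ℕ+ → ℕ → Prop} :
    (p * 2 ^ n ∈ MM P) ↔ P p n := by
  constructor
  · rintro ⟨q, hq, m, heq, hP⟩
    obtain ⟨h1, h2⟩ := decode hp hq heq
    subst h1; subst h2; exact hP
  · intro h; exact ⟨p, hp, n, rfl, h⟩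

lemma pnat_le_finite (c : ℕ) : {x : ℕ+ | (x : ℕ) ≤ c}.Finite := by
  have : {x : ℕ+ | (x : ℕ) ≤ c} ⊆ (fun x : ℕ+ => (x : ℕ)) ⁻¹' (Set.Iic c) := fun x hx => hx
  exact ((Set.finite_Iic c).preimage PNat.coe_injective.injOn).subset this

lemma pow_gap {x a a' : ℕ} (hne : a ≠ a') (h1 : ∃ u, x + a = 2 ^ u)
    (h2 : ∃ v, x + a' = 2 ^ v) : x ≤ max a a' := by
  rcases h1 with ⟨u, hu⟩
  rcases h2 with ⟨v, hv⟩
  rcases Nat.lt_or_ge a a' with hlt | hge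
  · have huv : 2 ^ u < 2 ^ v := by omega
    have : u < v := (Nat.pow_lt_pow_iff_right (by norm_num)).1 huv
    have h2v : 2 ^ (u + 1) ≤ 2 ^ v := Nat.pow_le_pow_right (by norm_num) (by omega)
    have : 2 * (x + a) ≤ x + a' := by
      rw [hu, hv]
      calc 2 * 2 ^ u = 2 ^ (u + 1) := by ring
        _ ≤ 2 ^ v := h2v
    omega
  · have hlt : a' < a := by omega
    have huv : 2 ^ v < 2 ^ u := by omega
    have : v < u := (Nat.pow_lt_pow_iff_right (by norm_num)).1 huv
    have h2v : 2 ^ (v + 1) ≤ 2 ^ u := Nat.pow_le_pow_right (by norm_num) (by omega)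
    have : 2 * (x + a') ≤ x + a := by
      rw [hu, hv]
      calc 2 * 2 ^ v = 2 ^ (v + 1) := by ring
        _ ≤ 2 ^ u := h2v
    omega

lemma key {a b m h : ℕ+} (ha : a ∈ Qset) (hb : b ∈ Qset) (hm : m ∈ Qset)
    (heq : h * m = a * b) : (m = a ∧ h = b) ∨ (m = b ∧ h = a) := by
  have hN : (h : ℕ) * (m : ℕ) = (a : ℕ) * (b : ℕ) := by
    rw [← PNat.mul_coe, ← PNat.mul_coe, heq]
  have hdvd : (m : ℕ) ∣ (a : ℕ) * (b : ℕ) := Dvd.intro_left _ hN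
  rcases (Nat.Prime.dvd_mul hm.1).1 hdvd with hma | hmb
  · have hma' : (m : ℕ) = (a : ℕ) := (Nat.prime_dvd_prime_iff_eq hm.1 ha.1).1 hma
    have hm_eq : m = a := PNat.coe_injective hma'
    subst hm_eq
    left
    refine ⟨rfl, ?_⟩
    have : h * m = b * m := by rw [heq]; ring
    exact mul_right_cancel this
  · have hmb' : (m : ℕ) = (b : ℕ) := (Nat.prime_dvd_prime_iff_eq hm.1 hb.1).1 hmb
    have hm_eq : m = b := PNat.coe_injective hmb'
    subst hm_eq
    right
    refine ⟨rfl, ?_⟩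
    have : h * m = a * m := by rw [heq]
    exact mul_right_cancel this

/-! ### The base ultrafilter `F3` on odd primes -/

noncomputable def eQemb : ℕ ↪ ↑Qset := Set.Infinite.natEmbedding Qset Qset_infinite

noncomputable def eQ : ℕ → ℕ+ := fun n => ((eQemb n : ↑Qset) : ℕ+)

lemma eQ_mem (n : ℕ) : eQ n ∈ Qset := (eQemb n).2

lemma eQ_inj : Function.Injective eQ := fun a b h =>
  eQemb.injective (Subtype.ext h)

noncomputable def F3 : Ultrafilter ℕ+ := ufOf eQ

lemma Qset_mem_F3 : Qset ∈ F3 := ufOf_mem eQ_mem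

lemma F3_nofin {A : Set ℕ+} (hA : A.Finite) : A ∉ F3 := ufOf_nmem eQ_inj hA

lemma F3_pick {T : Set ℕ+} (hT : T ∈ F3) : ∃ p, p ∈ T ∧ p ∈ Qset :=
  uf_pick hT Qset_mem_F3

lemma F3_bound {T : Set ℕ+} {c : ℕ} (hT : T ∈ F3)
    (h : ∀ p, p ∈ T → p ∈ Qset → (p : ℕ) ≤ c) : False :=
  F3_nofin ((pnat_le_finite c).subset (fun x hx => h x hx.1 hx.2))
    (Filter.inter_mem hT Qset_mem_F3)

/-! ### Blocks of exponents and the ultrafilter `G3` -/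

def wfun (i : ℕ) : ℕ → ℕ := fun t => 2 ^ (Nat.pair i t)

lemma wfun_inj (i : ℕ) : Function.Injective (wfun i) := fun a b h =>
  (Nat.pair_eq_pair.1 (Nat.pow_right_injective (le_refl 2) h)).2

def Wb (i : ℕ) : Set ℕ := Set.range (wfun i)

noncomputable def Vb (i : ℕ) : Ultrafilter ℕ := ufOf (wfun i)

lemma Wb_mem (i : ℕ) : Wb i ∈ Vb i := ufOf_mem (fun t => ⟨t, rfl⟩)

lemma Vb_nofin {i : ℕ} {A : Set ℕ} (hA : A.Finite) : A ∉ Vb i := ufOf_nmem (wfun_inj i) hA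

lemma Vb_pick {i : ℕ} {T : Set ℕ} (hT : T ∈ Vb i) : ∃ n, n ∈ T ∧ n ∈ Wb i :=
  uf_pick hT (Wb_mem i)

lemma Wb_disj {i j : ℕ} (hij : i ≠ j) {n : ℕ} (hi : n ∈ Wb i) (hj : n ∈ Wb j) : False := by
  obtain ⟨t, rfl⟩ := hi
  obtain ⟨s, hs⟩ := hj
  exact hij (Nat.pair_eq_pair.1 (Nat.pow_right_injective (le_refl 2) hs)).1.symm

def UW : Set ℕ := ⋃ i, Wb i

def blk (n : ℕ) : ℕ := (Nat.unpair (Nat.log 2 n)).1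

lemma blk_w (i t : ℕ) : blk (wfun i t) = i := by
  unfold blk wfun
  rw [Nat.log_pow (by norm_num), Nat.unpair_pair]

lemma UW_pow {n : ℕ} (h : n ∈ UW) : ∃ e, n = 2 ^ e := by
  obtain ⟨i, hi⟩ := Set.mem_iUnion.1 h
  obtain ⟨t, rfl⟩ := hi
  exact ⟨Nat.pair i t, rfl⟩

noncomputable def U3 : Ultrafilter ℕ := Filter.hyperfilter ℕ

lemma U3_nofin {A : Set ℕ} (hA : A.Finite) : A ∉ U3 := Filter.notMem_hyperfilter_of_finite hA

noncomputable def G3 : Ultrafilter ℕ+ :=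
  U3.bind fun i => umul F3 (Ultrafilter.map (fun n : ℕ => (2 : ℕ+) ^ n) (Vb i))

lemma mem_G3 {A : Set ℕ+} :
    A ∈ G3 ↔ {i : ℕ | {m : ℕ+ | {n : ℕ | m * 2 ^ n ∈ A} ∈ Vb i} ∈ F3} ∈ U3 := by
  change A ∈ Filter.bind _ _ ↔ _
  rw [Filter.mem_bind']
  have heq : {a : ℕ | A ∈ ((umul F3 (Ultrafilter.map (fun n : ℕ => (2 : ℕ+) ^ n) (Vb a)) :
      Ultrafilter ℕ+) : Filter ℕ+)} =
      {i : ℕ | {m : ℕ+ | {n : ℕ | m * 2 ^ n ∈ A} ∈ Vb i} ∈ F3} := by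
    ext i
    show A ∈ umul F3 (Ultrafilter.map (fun n : ℕ => (2 : ℕ+) ^ n) (Vb i)) ↔ _
    rw [mem_umul]
    rfl
  rw [heq]
  rfl

lemma fe_F3_G3 : fe F3 G3 := by
  intro B hB
  rw [mem_G3] at hB
  obtain ⟨i, hi⟩ := Ultrafilter.nonempty_of_mem hB
  refine ⟨{m : ℕ+ | {n : ℕ | m * 2 ^ n ∈ B} ∈ Vb i}, hi, ?_⟩
  intro S hS
  have hT : (⋂ m ∈ S, {n : ℕ | m * 2 ^ n ∈ B}) ∈ Vb i :=
    (Filter.biInter_finset_mem S).2 (fun m hm => hS hm)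
  obtain ⟨n₀, hn₀⟩ := Ultrafilter.nonempty_of_mem hT
  refine ⟨2 ^ n₀, fun s hs => ?_⟩
  have hsB : s * 2 ^ n₀ ∈ B := Set.mem_iInter₂.1 hn₀ s hs
  rwa [mul_comm]

lemma not_divM_F3_G3 : ¬ divM F3 G3 := by
  rintro ⟨H, K, hG⟩
  have hmem : ∀ A : Set ℕ+,
      A ∈ G3 ↔ {h : ℕ+ | {m : ℕ+ | {k : ℕ+ | h * m * k ∈ A} ∈ K} ∈ F3} ∈ H := by
    intro A; rw [hG]; exact mem_umul3
  -- Step 1: `H` and `K` concentrate on powers of two.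
  have hom1 : {x : ℕ+ | om x = 1} ∈ G3 := by
    rw [mem_G3]
    refine usup uuniv fun i _ => ?_
    show {m : ℕ+ | {n : ℕ | m * 2 ^ n ∈ {x : ℕ+ | om x = 1}} ∈ Vb i} ∈ F3
    refine usup Qset_mem_F3 fun p hp => ?_
    show {n : ℕ | om (p * 2 ^ n) = 1} ∈ Vb i
    have huniv : {n : ℕ | om (p * 2 ^ n) = 1} = Set.univ := Set.eq_univ_of_forall fun n => by
      show om (p * 2 ^ n) = 1
      rw [om_mul, om_Q hp, om_two_pow]
    rw [huniv]; exact Filter.univ_mem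
  have hSH := (hmem _).1 hom1
  have hSHsub : ∀ h ∈ {h : ℕ+ | {m : ℕ+ | {k : ℕ+ | h * m * k ∈ {x : ℕ+ | om x = 1}} ∈ K} ∈ F3},
      om h = 0 := by
    intro h hh
    obtain ⟨m, hm1, hmQ⟩ := F3_pick hh
    obtain ⟨k, hk⟩ := Ultrafilter.nonempty_of_mem hm1
    have hok : om (h * m * k) = 1 := hk
    rw [om_mul, om_mul, om_Q hmQ] at hok
    omega
  have h2H : twoPow ∈ H :=
    usup hSH (fun h hh => om_zero_twoPow (hSHsub h hh))
  have h2K : twoPow ∈ K := by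
    obtain ⟨h₀, hh₀⟩ := Ultrafilter.nonempty_of_mem hSH
    obtain ⟨m₀, hm₀1, hm₀Q⟩ := F3_pick hh₀
    have hOmh₀ : om h₀ = 0 := hSHsub _ hh₀
    refine usup hm₀1 fun k hk => ?_
    have hok : om (h₀ * m₀ * k) = 1 := hk
    rw [om_mul, om_mul, om_Q hm₀Q, hOmh₀] at hok
    exact om_zero_twoPow (by omega)
  -- The basic member `M₀`.
  have hM₀G : MM (fun _ m => m ∈ UW) ∈ G3 := by
    rw [mem_G3]
    refine usup uuniv fun i _ => ?_
    show {m : ℕ+ | {n : ℕ | m * 2 ^ n ∈ MM (fun _ m => m ∈ UW)} ∈ Vb i} ∈ F3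
    refine usup Qset_mem_F3 fun p hp => ?_
    show {n : ℕ | p * 2 ^ n ∈ MM (fun _ m => m ∈ UW)} ∈ Vb i
    refine usup (Wb_mem i) fun n hn => ?_
    exact (MM_iff hp).2 (Set.mem_iUnion.2 ⟨i, hn⟩)
  by_cases hHp : ∃ x, H = pure x
  · -- Case B : `H` is principal.
    obtain ⟨h₀, rfl⟩ := hHp
    have hmemB : ∀ A : Set ℕ+, A ∈ G3 ↔ {m : ℕ+ | {k : ℕ+ | h₀ * m * k ∈ A} ∈ K} ∈ F3 :=
      fun A => (hmem A).trans Ultrafilter.mem_pure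
    have hh₀2 : h₀ ∈ twoPow := by rwa [Ultrafilter.mem_pure] at h2H
    have hre : ∀ (m k : ℕ+), k ∈ twoPow → h₀ * m * k = m * 2 ^ (v2 h₀ + v2 k) := by
      intro m k hk
      nth_rewrite 1 [twoPow_eq hh₀2]
      nth_rewrite 1 [twoPow_eq hk]
      rw [pow_add]; ring
    have hY1 : {k : ℕ+ | k ∈ twoPow ∧ v2 h₀ + v2 k ∈ UW} ∈ K := by
      have hMK := (hmemB _).1 hM₀G
      obtain ⟨m₁, hm₁1, hm₁Q⟩ := F3_pick hMK
      refine usup (uint hm₁1 h2K) ?_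
      rintro k ⟨hkM, hk2⟩
      refine ⟨hk2, ?_⟩
      have hin : h₀ * m₁ * k ∈ MM (fun _ m => m ∈ UW) := hkM
      rw [hre m₁ k hk2] at hin
      exact (MM_iff hm₁Q).1 hin
    have hDnot : MM (fun q m => m ∈ UW ∧ (q : ℕ) ≤ blk m) ∉ G3 := by
      intro hDG
      rw [mem_G3] at hDG
      obtain ⟨i, hi⟩ := Ultrafilter.nonempty_of_mem hDG
      refine F3_bound (c := i) hi ?_
      intro p hpT hpQ
      have hslice : {n : ℕ | p * 2 ^ n ∈ MM (fun q m => m ∈ UW ∧ (q : ℕ) ≤ blk m)} ∈ Vb i := hpT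
      obtain ⟨n, hn1, hnW⟩ := Vb_pick hslice
      have hPn := (MM_iff hpQ).1 hn1
      obtain ⟨t, rfl⟩ := hnW
      have h2 := hPn.2
      rwa [blk_w] at h2
    have hDc : (MM (fun q m => m ∈ UW ∧ (q : ℕ) ≤ blk m))ᶜ ∈ G3 :=
      (Ultrafilter.compl_mem_iff_notMem).2 hDnot
    have hDcH := (hmemB _).1 hDc
    obtain ⟨p, hp1, hpQ⟩ := F3_pick hDcH
    have hY2 : {k : ℕ+ | k ∈ twoPow ∧ ∃ j, j < (p : ℕ) ∧ v2 h₀ + v2 k ∈ Wb j} ∉ K := by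
      intro hY2K
      have hM₂G : MM (fun _ m => ∃ j, j < (p : ℕ) ∧ m ∈ Wb j) ∈ G3 := by
        rw [hmemB]
        refine usup Qset_mem_F3 fun m hm => ?_
        show {k : ℕ+ | h₀ * m * k ∈ MM (fun _ m => ∃ j, j < (p : ℕ) ∧ m ∈ Wb j)} ∈ K
        refine usup hY2K ?_
        rintro k ⟨hk2, j, hj, hkW⟩
        show h₀ * m * k ∈ MM _
        rw [hre m k hk2]
        exact (MM_iff hm).2 ⟨j, hj, hkW⟩
      rw [mem_G3] at hM₂G
      have hsubout : {i : ℕ | {m : ℕ+ | {n : ℕ |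
          m * 2 ^ n ∈ MM (fun _ m => ∃ j, j < (p : ℕ) ∧ m ∈ Wb j)} ∈ Vb i} ∈ F3} ⊆
          Set.Iio (p : ℕ) := by
        intro i hi
        obtain ⟨q, hq1, hqQ⟩ := F3_pick hi
        obtain ⟨n, hn1, hnW⟩ := Vb_pick hq1
        obtain ⟨j, hj, hnWj⟩ := (MM_iff hqQ).1 hn1
        by_cases hij : i = j
        · subst hij; exact hj
        · exact (Wb_disj hij hnW hnWj).elim
      exact U3_nofin ((Set.finite_Iio (p : ℕ)).subset hsubout) hM₂G
    have hY2c := (Ultrafilter.compl_mem_iff_notMem).2 hY2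
    have hfinal : {k : ℕ+ | h₀ * p * k ∈ MM (fun q m => m ∈ UW ∧ (q : ℕ) ≤ blk m)} ∈ K := by
      refine usup (uint hY1 hY2c) ?_
      rintro k ⟨⟨hk2, hkUW⟩, hkc⟩
      show h₀ * p * k ∈ MM _
      rw [hre p k hk2]
      refine (MM_iff hpQ).2 ⟨hkUW, ?_⟩
      obtain ⟨j₀, hj₀⟩ := Set.mem_iUnion.1 hkUW
      obtain ⟨t, ht⟩ := hj₀
      have hge : (p : ℕ) ≤ j₀ := by
        by_contra hlt
        exact hkc ⟨hk2, j₀, by omega, ⟨t, ht⟩⟩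
      rw [← ht, blk_w]
      exact hge
    obtain ⟨k, hkD, hkDc⟩ := uf_pick hfinal hp1
    exact hkDc hkD
  · -- Case C : `H` is not principal.
    have hnofinH : ∀ B : Set ℕ+, B.Finite → B ∉ H := fun B hB hBH =>
      hHp (let ⟨x, _, hx⟩ := Ultrafilter.eq_pure_of_finite_mem hB hBH; ⟨x, hx⟩)
    have hSH₀ := (hmem _).1 hM₀G
    have hSH₂ : ({h : ℕ+ | {m : ℕ+ | {k : ℕ+ | h * m * k ∈ MM (fun _ m => m ∈ UW)} ∈ K} ∈ F3} ∩
        twoPow) ∈ H := uint hSH₀ h2H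
    have hZ : ∀ h ∈ ({h : ℕ+ | {m : ℕ+ | {k : ℕ+ | h * m * k ∈ MM (fun _ m => m ∈ UW)} ∈ K} ∈ F3}
        ∩ twoPow), {k : ℕ+ | k ∈ twoPow ∧ v2 h + v2 k ∈ UW} ∈ K := by
      rintro h ⟨hh1, hh2⟩
      obtain ⟨m, hm1, hmQ⟩ := F3_pick hh1
      refine usup (uint hm1 h2K) ?_
      rintro k ⟨hkM, hk2⟩
      refine ⟨hk2, ?_⟩
      have hin : h * m * k ∈ MM (fun _ m => m ∈ UW) := hkM
      have hre2 : h * m * k = m * 2 ^ (v2 h + v2 k) := by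
        nth_rewrite 1 [twoPow_eq hh2]
        nth_rewrite 1 [twoPow_eq hk2]
        rw [pow_add]; ring
      rw [hre2] at hin
      exact (MM_iff hmQ).1 hin
    have hinf : ({h : ℕ+ | {m : ℕ+ | {k : ℕ+ | h * m * k ∈ MM (fun _ m => m ∈ UW)} ∈ K} ∈ F3} ∩
        twoPow).Infinite := fun hfin => hnofinH _ hfin hSH₂
    obtain ⟨h, hh, h', hh', hne⟩ := hinf.nontrivial
    have hva : v2 h ≠ v2 h' := fun hv => hne (by rw [twoPow_eq hh.2, twoPow_eq hh'.2, hv])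
    have hZZ := uint (hZ h hh) (hZ h' hh')
    have hfinZZ : ({k : ℕ+ | k ∈ twoPow ∧ v2 h + v2 k ∈ UW} ∩
        {k : ℕ+ | k ∈ twoPow ∧ v2 h' + v2 k ∈ UW}).Finite := by
      refine ((Set.finite_Iic (max (v2 h) (v2 h'))).image (fun x : ℕ => (2 : ℕ+) ^ x)).subset ?_
      rintro k ⟨⟨hk2, hkU⟩, ⟨-, hkU'⟩⟩
      have e1 : ∃ u, v2 k + v2 h = 2 ^ u := by
        obtain ⟨u, hu⟩ := UW_pow hkU; exact ⟨u, by omega⟩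
      have e2 : ∃ u, v2 k + v2 h' = 2 ^ u := by
        obtain ⟨u, hu⟩ := UW_pow hkU'; exact ⟨u, by omega⟩
      have hb : v2 k ≤ max (v2 h) (v2 h') := pow_gap hva e1 e2
      exact ⟨v2 k, hb, (twoPow_eq hk2).symm⟩
    obtain ⟨k₀, -, hKeq⟩ := Ultrafilter.eq_pure_of_finite_mem hfinZZ hZZ
    subst hKeq
    have hk₀2 : k₀ ∈ twoPow := by rwa [Ultrafilter.mem_pure] at h2K
    have hmemC : ∀ A : Set ℕ+, A ∈ G3 ↔ {h : ℕ+ | {m : ℕ+ | h * m * k₀ ∈ A} ∈ F3} ∈ H := by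
      intro A
      rw [hmem A]
      simp only [Ultrafilter.mem_pure, Set.mem_setOf_eq]
    have hApnnot : MM (fun q m => m < (q : ℕ)) ∉ G3 := by
      intro hA
      rw [mem_G3] at hA
      obtain ⟨i, hi⟩ := Ultrafilter.nonempty_of_mem hA
      obtain ⟨q, hq1, hqQ⟩ := F3_pick hi
      have hsl : {n : ℕ | q * 2 ^ n ∈ MM (fun q m => m < (q : ℕ))} ∈ Vb i := hq1
      have hsub : {n : ℕ | q * 2 ^ n ∈ MM (fun q m => m < (q : ℕ))} ⊆ Set.Iio (q : ℕ) :=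
        fun n hn => (MM_iff hqQ).1 hn
      exact Vb_nofin ((Set.finite_Iio (q : ℕ)).subset hsub) hsl
    have hApnc := (Ultrafilter.compl_mem_iff_notMem).2 hApnnot
    have hAc := (hmemC _).1 hApnc
    obtain ⟨h, hh1, hh2⟩ := uf_pick hAc h2H
    refine F3_bound (c := v2 h + v2 k₀) hh1 ?_
    intro m hmT hmQ
    by_contra hgt
    apply hmT
    show h * m * k₀ ∈ MM (fun q m => m < (q : ℕ))
    have hre3 : h * m * k₀ = m * 2 ^ (v2 h + v2 k₀) := by
      nth_rewrite 1 [twoPow_eq hh2]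
      nth_rewrite 1 [twoPow_eq hk₀2]
      rw [pow_add]; ring
    rw [hre3]
    exact (MM_iff hmQ).2 (by omega)

/-! ### Part 4: `udvd` without `fe` -/

def Bstar : Set ℕ+ := {x : ℕ+ | ∃ p : ℕ+, (p : ℕ).Prime ∧ ∃ j : ℕ, 2 ≤ j ∧ x = p ^ j}

lemma upcl_mono : Monotone upcl := fun A B h x hx => by
  obtain ⟨a, ha, hd⟩ := hx
  exact ⟨a, h ha, hd⟩

noncomputable def g4 : Filter ℕ+ := (F3 : Filter ℕ+).lift' upcl ⊓ 𝓟 Bstar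

lemma g4_neBot : g4.NeBot := by
  rw [g4, Filter.inf_principal_neBot_iff]
  intro Uu hUu
  obtain ⟨A, hA, hsub⟩ := (Filter.mem_lift'_sets upcl_mono).1 hUu
  obtain ⟨p, hpA, hpQ⟩ := F3_pick hA
  exact ⟨p ^ 2, hsub ⟨p, hpA, dvd_pow_self p two_ne_zero⟩, p, hpQ.1, 2, le_refl 2, rfl⟩

noncomputable def G4 : Ultrafilter ℕ+ := @Ultrafilter.of _ g4 g4_neBot

lemma mem_G4 {s : Set ℕ+} (h : s ∈ g4) : s ∈ G4 :=
  Filter.le_def.mp (@Ultrafilter.of_le _ g4 g4_neBot) s h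

lemma udvd_F3_G4 : udvd F3 G4 := fun A hA =>
  mem_G4 (Filter.mem_inf_of_left (Filter.mem_lift' hA))

lemma not_fe_F3_G4 : ¬ fe F3 G4 := by
  intro hfe
  have hB : Bstar ∈ G4 := mem_G4 (Filter.mem_inf_of_right (Filter.mem_principal_self _))
  obtain ⟨A, hA, hfeS⟩ := hfe Bstar hB
  have hAQ : (A ∩ Qset) ∈ F3 := uint hA Qset_mem_F3
  have hinf : (A ∩ Qset).Infinite := fun hfin => F3_nofin hfin hAQ
  obtain ⟨p, hp, q, hq, hpq⟩ := hinf.nontrivial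
  obtain ⟨k, hk⟩ := hfeS {p, q} (by
    intro x hx
    rcases Finset.mem_insert.1 (by exact_mod_cast hx) with rfl | hx'
    · exact hp.1
    · rw [Finset.mem_singleton.1 hx']; exact hq.1)
  have hkp := hk p (by simp)
  have hkq := hk q (by simp)
  obtain ⟨r, hr, j, hj, hje⟩ := hkp
  obtain ⟨r', hr', j', hj', hje'⟩ := hkq
  have h1 : (k : ℕ) * (p : ℕ) = (r : ℕ) ^ j := by
    rw [← PNat.mul_coe, ← PNat.pow_coe, hje]
  have h2 : (k : ℕ) * (q : ℕ) = (r' : ℕ) ^ j' := by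
    rw [← PNat.mul_coe, ← PNat.pow_coe, hje']
  have hpP : (p : ℕ).Prime := hp.2.1
  have hqP : (q : ℕ).Prime := hq.2.1
  have hpr : (p : ℕ) = (r : ℕ) :=
    (Nat.prime_dvd_prime_iff_eq hpP hr).1 (hpP.dvd_of_dvd_pow ⟨k, by rw [← h1]; ring⟩)
  have hqr : (q : ℕ) = (r' : ℕ) :=
    (Nat.prime_dvd_prime_iff_eq hqP hr').1 (hqP.dvd_of_dvd_pow ⟨k, by rw [← h2]; ring⟩)
  have hk1 : (k : ℕ) = (p : ℕ) ^ (j - 1) := by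
    have hj1 : j = (j - 1) + 1 := by omega
    have : (k : ℕ) * (p : ℕ) = (p : ℕ) ^ (j - 1) * (p : ℕ) := by
      have hj2 : (j - 1) + 1 = j := by omega
      rw [h1, ← hpr, ← pow_succ, hj2]
    exact Nat.eq_of_mul_eq_mul_right p.pos this
  have hk2 : (k : ℕ) = (q : ℕ) ^ (j' - 1) := by
    have hj1 : j' = (j' - 1) + 1 := by omega
    have : (k : ℕ) * (q : ℕ) = (q : ℕ) ^ (j' - 1) * (q : ℕ) := by
      have hj2 : (j' - 1) + 1 = j' := by omega
      rw [h2, ← hqr, ← pow_succ, hj2]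
    exact Nat.eq_of_mul_eq_mul_right q.pos this
  have hpk : (p : ℕ) ∣ (k : ℕ) := by
    rw [hk1]
    exact dvd_pow_self _ (by omega)
  have hpq' : (p : ℕ) ∣ (q : ℕ) := by
    rw [hk2] at hpk
    exact hpP.dvd_of_dvd_pow hpk
  exact hpq (PNat.coe_injective ((Nat.prime_dvd_prime_iff_eq hpP hqP).1 hpq'))

/-! ### Parts 1 and 2: two disjoint blocks of primes -/

noncomputable def e1 : ℕ → ℕ+ := fun n => eQ (2 * n)
noncomputable def e2 : ℕ → ℕ+ := fun n => eQ (2 * n + 1)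

lemma e1_inj : Function.Injective e1 := fun a b h => by
  have := eQ_inj h; omega

lemma e2_inj : Function.Injective e2 := fun a b h => by
  have := eQ_inj h; omega

noncomputable def F1 : Ultrafilter ℕ+ := ufOf e1
noncomputable def K1 : Ultrafilter ℕ+ := ufOf e2

def Q1 : Set ℕ+ := Set.range e1
def Q2 : Set ℕ+ := Set.range e2

lemma Q1_mem : Q1 ∈ F1 := ufOf_mem (fun n => ⟨n, rfl⟩)
lemma Q2_mem : Q2 ∈ K1 := ufOf_mem (fun n => ⟨n, rfl⟩)
lemma F1_nofin {A : Set ℕ+} (hA : A.Finite) : A ∉ F1 := ufOf_nmem e1_inj hA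
lemma K1_nofin {A : Set ℕ+} (hA : A.Finite) : A ∉ K1 := ufOf_nmem e2_inj hA

lemma Q1_sub : Q1 ⊆ Qset := by rintro x ⟨n, rfl⟩; exact eQ_mem _
lemma Q2_sub : Q2 ⊆ Qset := by rintro x ⟨n, rfl⟩; exact eQ_mem _

lemma Q12_disj {x : ℕ+} (h1 : x ∈ Q1) (h2 : x ∈ Q2) : False := by
  obtain ⟨a, rfl⟩ := h1
  obtain ⟨b, hb⟩ := h2
  have := eQ_inj hb
  omega

lemma pnat_gt_mem_K1 (c : ℕ+) : {x : ℕ+ | (c : ℕ) < (x : ℕ)} ∈ K1 := by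
  refine uf_cofin (fun B hB => K1_nofin hB) ?_
  have : {x : ℕ+ | (c : ℕ) < (x : ℕ)}ᶜ = {x : ℕ+ | (x : ℕ) ≤ (c : ℕ)} := by
    ext x; simp [Set.mem_compl_iff]
  rw [this]; exact pnat_le_finite _

lemma pnat_gt_mem_F1 (c : ℕ+) : {x : ℕ+ | (c : ℕ) < (x : ℕ)} ∈ F1 := by
  refine uf_cofin (fun B hB => F1_nofin hB) ?_
  have : {x : ℕ+ | (c : ℕ) < (x : ℕ)}ᶜ = {x : ℕ+ | (x : ℕ) ≤ (c : ℕ)} := by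
    ext x; simp [Set.mem_compl_iff]
  rw [this]; exact pnat_le_finite _

/-- The test set for part 1 : products `a*b`, `a ∈ Q1`, `b ∈ Q2`, `a < b`. -/
def A1 : Set ℕ+ := {x : ℕ+ | ∃ a ∈ Q1, ∃ b ∈ Q2, x = a * b ∧ (a : ℕ) < (b : ℕ)}

lemma A1_mem : A1 ∈ umul F1 K1 := by
  rw [mem_umul]
  refine usup Q1_mem fun a ha => ?_
  show {n : ℕ+ | a * n ∈ A1} ∈ K1
  refine usup (uint Q2_mem (pnat_gt_mem_K1 a)) ?_
  rintro b ⟨hb, hab⟩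
  exact ⟨a, ha, b, hb, rfl, hab⟩

lemma A1_not : ∀ H : Ultrafilter ℕ+, A1 ∉ umul H F1 := by
  intro H hmem
  rw [mem_umul] at hmem
  obtain ⟨h, hh⟩ := Ultrafilter.nonempty_of_mem hmem
  have hT : {m : ℕ+ | h * m ∈ A1} ∈ F1 := hh
  have hsub : ({m : ℕ+ | h * m ∈ A1} ∩ Q1) ⊆ {x : ℕ+ | (x : ℕ) ≤ (h : ℕ)} := by
    rintro m ⟨hm, hmQ1⟩
    obtain ⟨a, ha, b, hb, heq, hab⟩ := hm
    rcases key (Q1_sub ha) (Q2_sub hb) (Q1_sub hmQ1) heq with ⟨hma, hhb⟩ | ⟨hmb, -⟩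
    · subst hma; subst hhb
      exact le_of_lt hab
    · exact (Q12_disj hmQ1 (hmb ▸ hb)).elim
  exact F1_nofin ((pnat_le_finite _).subset hsub) (uint hT Q1_mem)

/-- Test sets for part 2. -/
def A2 : Set ℕ+ := {x : ℕ+ | ∃ a ∈ Q1, ∃ b ∈ Q2, x = a * b ∧ (b : ℕ) < (a : ℕ)}

lemma A2_mem : A2 ∈ umul K1 F1 := by
  rw [mem_umul]
  refine usup Q2_mem fun b hb => ?_
  show {m : ℕ+ | b * m ∈ A2} ∈ F1
  refine usup (uint Q1_mem (pnat_gt_mem_F1 b)) ?_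
  rintro a ⟨ha, hba⟩
  exact ⟨a, ha, b, hb, mul_comm b a, hba⟩

lemma part2_not : ∀ H : Ultrafilter ℕ+, umul K1 F1 ≠ umul F1 H := by
  intro H hH
  by_cases hHp : ∃ c, H = pure c
  · obtain ⟨c, rfl⟩ := hHp
    have hT : {x : ℕ+ | ∃ a ∈ Q1, ∃ b ∈ Q2, x = a * b ∧ b ≠ c} ∈ umul K1 F1 := by
      rw [mem_umul]
      refine usup (uint Q2_mem ((Ultrafilter.compl_mem_iff_notMem).2
        (K1_nofin (Set.finite_singleton c)))) ?_
      rintro b ⟨hb, hbc⟩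
      show {m : ℕ+ | b * m ∈ _} ∈ F1
      refine usup Q1_mem fun a ha => ?_
      exact ⟨a, ha, b, hb, mul_comm b a, fun h => hbc (h ▸ rfl)⟩
    rw [hH, mem_umul] at hT
    obtain ⟨m, hm1, hmQ1⟩ := uf_pick hT Q1_mem
    have hmc : m * c ∈ {x : ℕ+ | ∃ a ∈ Q1, ∃ b ∈ Q2, x = a * b ∧ b ≠ c} :=
      Ultrafilter.mem_pure.1 hm1
    obtain ⟨a, ha, b, hb, heq, hbc⟩ := hmc
    have heq' : c * m = a * b := by rw [← heq]; ring
    rcases key (Q1_sub ha) (Q2_sub hb) (Q1_sub hmQ1) heq' with ⟨-, hcb⟩ | ⟨hmb, -⟩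
    · exact hbc hcb.symm
    · exact Q12_disj hmQ1 (hmb ▸ hb)
  · have hnofinH : ∀ B : Set ℕ+, B.Finite → B ∉ H := fun B hB hBH =>
      hHp (let ⟨x, _, hx⟩ := Ultrafilter.eq_pure_of_finite_mem hB hBH; ⟨x, hx⟩)
    have hA2 := A2_mem
    rw [hH, mem_umul] at hA2
    obtain ⟨m, hm1, hmQ1⟩ := uf_pick hA2 Q1_mem
    have hsub : {k : ℕ+ | m * k ∈ A2} ⊆ {x : ℕ+ | (x : ℕ) ≤ (m : ℕ)} := by
      intro k hk
      obtain ⟨a, ha, b, hb, heq, hba⟩ := hk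
      have heq' : k * m = a * b := by rw [← heq]; ring
      rcases key (Q1_sub ha) (Q2_sub hb) (Q1_sub hmQ1) heq' with ⟨hma, hkb⟩ | ⟨hmb, -⟩
      · subst hma; subst hkb
        exact le_of_lt hba
      · exact (Q12_disj hmQ1 (hmb ▸ hb)).elim
    exact hnofinH _ ((pnat_le_finite _).subset hsub) hm1

end Aux19

theorem stmt19 :
    ((∀ F G : Ultrafilter ℕ+, divL F G → divM F G) ∧
      ∃ F G : Ultrafilter ℕ+, divM F G ∧ ¬ divL F G) ∧
    ((∀ F G : Ultrafilter ℕ+, divR F G → divM F G) ∧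
      ∃ F G : Ultrafilter ℕ+, divM F G ∧ ¬ divR F G) ∧
    ((∀ F G : Ultrafilter ℕ+, divM F G → fe F G) ∧
      ∃ F G : Ultrafilter ℕ+, fe F G ∧ ¬ divM F G) ∧
    ((∀ F G : Ultrafilter ℕ+, fe F G → udvd F G) ∧
      ∃ F G : Ultrafilter ℕ+, udvd F G ∧ ¬ fe F G) := by
  refine ⟨⟨?_, ?_⟩, ⟨?_, ?_⟩, ⟨?_, ?_⟩, ⟨?_, ?_⟩⟩
  · rintro F G ⟨H, hH⟩
    exact ⟨H, pure 1, by rw [Aux19.umul_one_right]; exact hH⟩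
  · refine ⟨Aux19.F1, umul Aux19.F1 Aux19.K1,
      ⟨pure 1, Aux19.K1, by rw [Aux19.umul_one_left]⟩, ?_⟩
    rintro ⟨H, hH⟩
    exact Aux19.A1_not H (hH ▸ Aux19.A1_mem)
  · rintro F G ⟨H, hH⟩
    exact ⟨pure 1, H, by rw [Aux19.umul_one_left]; exact hH⟩
  · refine ⟨Aux19.F1, umul Aux19.K1 Aux19.F1,
      ⟨Aux19.K1, pure 1, by rw [Aux19.umul_one_right]⟩, ?_⟩
    rintro ⟨H, hH⟩
    exact Aux19.part2_not H hH
  · rintro F G ⟨H, K, hG⟩ B hB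
    rw [hG, Aux19.mem_umul3] at hB
    obtain ⟨h, hh⟩ := Ultrafilter.nonempty_of_mem hB
    refine ⟨{m : ℕ+ | {k : ℕ+ | h * m * k ∈ B} ∈ K}, hh, ?_⟩
    intro S hS
    have hT : (⋂ m ∈ S, {k : ℕ+ | h * m * k ∈ B}) ∈ K :=
      (Filter.biInter_finset_mem S).2 (fun m hm => hS hm)
    obtain ⟨k₀, hk₀⟩ := Ultrafilter.nonempty_of_mem hT
    refine ⟨h * k₀, fun s hs => ?_⟩
    have hmem : h * s * k₀ ∈ B := Set.mem_iInter₂.1 hk₀ s hs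
    rw [mul_right_comm]
    exact hmem
  · exact ⟨Aux19.F3, Aux19.G3, Aux19.fe_F3_G3, Aux19.not_divM_F3_G3⟩
  · intro F G hfe A hA
    by_contra hn
    have hB : (upcl A)ᶜ ∈ G := (Ultrafilter.compl_mem_iff_notMem).2 hn
    obtain ⟨A', hA', hfeS⟩ := hfe _ hB
    obtain ⟨s, hs1, hs2⟩ := Aux19.uf_pick hA' hA
    obtain ⟨k, hk⟩ := hfeS {s} (by
      intro x hx
      simp only [Finset.coe_singleton, Set.mem_singleton_iff] at hx
      rwa [hx])
    exact (hk s (Finset.mem_singleton_self s)) ⟨s, hs2, Dvd.intro_left k rfl⟩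
  · exact ⟨Aux19.F3, Aux19.G4, Aux19.udvd_F3_G4, Aux19.not_fe_F3_G4⟩
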